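/- Let H_pen = Σ_{b=1}^n (g_x^{(b)} X₁^{(b)}X₂^{(b)} + g_z^{(b)} Z₁^{(b)}Z₂^{(b)} + g_x^{(b)} X₃^{(b)}X₄^{(b)} + g_z^{(b)} Z₃^{(b)}Z₄^{(b)}) on 4n qubits, with all g_x^{(b)}, g_z^{(b)} nonzero and |g_x^{(b)}| ≠ |g_z^{(b)}|. Let P₀ be the projector onto the zero-eigenspace of H_pen. Then for every single-qubit Pauli operator V, P₀ V P₀ = 0. -/

import Mathlib

open Matrix Kronecker

noncomputable section

def PauliX : Matrix (Fin 2) (Fin 2) ℂ := !![0, 1; 1, 0]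
def PauliY : Matrix (Fin 2) (Fin 2) ℂ := !![0, -Complex.I; Complex.I, 0]
def PauliZ : Matrix (Fin 2) (Fin 2) ℂ := !![1, 0; 0, -1]

/-- The single-qubit operator `A` acting on qubit `i` of a register of qubits
indexed by `ι` (identity on all other qubits). -/
def pauliAt {ι : Type*} [Fintype ι] [DecidableEq ι] (A : Matrix (Fin 2) (Fin 2) ℂ)
    (i : ι) : Matrix (ι → Fin 2) (ι → Fin 2) ℂ :=
  fun f g => A (f i) (g i) * ∏ j ∈ Finset.univ.erase i, (if f j = g j then 1 else 0)

/-- The block penalty Hamiltonian on `n` blocks of 4 qubits: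
`H_pen = Σ_b (g_x⁽ᵇ⁾ X₁⁽ᵇ⁾X₂⁽ᵇ⁾ + g_z⁽ᵇ⁾ Z₁⁽ᵇ⁾Z₂⁽ᵇ⁾ + g_x⁽ᵇ⁾ X₃⁽ᵇ⁾X₄⁽ᵇ⁾ + g_z⁽ᵇ⁾ Z₃⁽ᵇ⁾Z₄⁽ᵇ⁾)`. -/
def HpenBlocks (n : ℕ) (gx gz : Fin n → ℝ) :
    Matrix (Fin n × Fin 4 → Fin 2) (Fin n × Fin 4 → Fin 2) ℂ :=
  ∑ b : Fin n,
    ((gx b : ℂ) • (pauliAt PauliX (b, (0 : Fin 4)) * pauliAt PauliX (b, (1 : Fin 4))) +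
     (gz b : ℂ) • (pauliAt PauliZ (b, (0 : Fin 4)) * pauliAt PauliZ (b, (1 : Fin 4))) +
     (gx b : ℂ) • (pauliAt PauliX (b, (2 : Fin 4)) * pauliAt PauliX (b, (3 : Fin 4))) +
     (gz b : ℂ) • (pauliAt PauliZ (b, (2 : Fin 4)) * pauliAt PauliZ (b, (3 : Fin 4))))

variable {ι : Type*} [Fintype ι] [DecidableEq ι]

lemma sum_update_aux (f : ι → Fin 2) (i : ι) (F : (ι → Fin 2) → ℂ)
    (hF : ∀ h, (∃ j, j ≠ i ∧ h j ≠ f j) → F h = 0) :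
    ∑ h : ι → Fin 2, F h = ∑ x : Fin 2, F (Function.update f i x) := by
  classical
  have hinj : ∀ x ∈ Finset.univ, ∀ y ∈ Finset.univ,
      Function.update f i x = Function.update f i y → (x : Fin 2) = y := by
    intro x _ y _ hxy
    have := congrFun hxy i
    simpa using this
  rw [← Finset.sum_image (s := Finset.univ) (f := F) (g := fun x => Function.update f i x) hinj]
  refine (Finset.sum_subset (Finset.subset_univ _) ?_).symm
  intro h _ hnot
  apply hF
  by_contra hc
  push_neg at hc
  apply hnot
  simp only [Finset.mem_image, Finset.mem_univ, true_and]
  refine ⟨h i, funext fun j => ?_⟩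
  by_cases hj : j = i
  · subst hj; simp
  · simp [Function.update, hj, (hc j hj)]

lemma pauliAt_mul_same (A B : Matrix (Fin 2) (Fin 2) ℂ) (i : ι) :
    pauliAt A i * pauliAt B i = pauliAt (A * B) i := by
  ext f g
  rw [Matrix.mul_apply]
  have h0 : ∀ h, (∃ j, j ≠ i ∧ h j ≠ f j) → pauliAt A i f h * pauliAt B i h g = 0 := by
    rintro h ⟨j, hj, hne⟩
    have : pauliAt A i f h = 0 := by
      unfold pauliAt
      rw [mul_eq_zero]; right
      refine Finset.prod_eq_zero (Finset.mem_erase.2 ⟨hj, Finset.mem_univ _⟩) ?_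
      exact if_neg fun hh => hne hh.symm
    simp [this]
  rw [sum_update_aux f i _ h0]
  unfold pauliAt
  have h1 : ∀ x : Fin 2, (∏ j ∈ Finset.univ.erase i,
      (if f j = Function.update f i x j then (1:ℂ) else 0)) = 1 := by
    intro x
    refine Finset.prod_eq_one fun j hj => ?_
    rcases Finset.mem_erase.1 hj with ⟨hji, _⟩
    simp [Function.update, hji]
  have h2 : ∀ x : Fin 2, (∏ j ∈ Finset.univ.erase i,
      (if Function.update f i x j = g j then (1:ℂ) else 0)) =
      ∏ j ∈ Finset.univ.erase i, (if f j = g j then (1:ℂ) else 0) := by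
    intro x
    refine Finset.prod_congr rfl fun j hj => ?_
    rcases Finset.mem_erase.1 hj with ⟨hji, _⟩
    simp [Function.update, hji]
  simp only [Function.update_self, h1, h2, mul_one]
  rw [Matrix.mul_apply, Finset.sum_mul]
  congr 1
  ext x
  ring

lemma pauliAt_mul_apply_ne {i j : ι} (hij : i ≠ j) (A B : Matrix (Fin 2) (Fin 2) ℂ)
    (f g : ι → Fin 2) :
    (pauliAt A i * pauliAt B j) f g =
      A (f i) (g i) * B (f j) (g j) *
        ∏ l ∈ (Finset.univ.erase i).erase j, (if f l = g l then (1:ℂ) else 0) := by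
  rw [Matrix.mul_apply]
  have h0 : ∀ h, (∃ l, l ≠ i ∧ h l ≠ f l) → pauliAt A i f h * pauliAt B j h g = 0 := by
    rintro h ⟨l, hl, hne⟩
    have : pauliAt A i f h = 0 := by
      unfold pauliAt
      rw [mul_eq_zero]; right
      refine Finset.prod_eq_zero (Finset.mem_erase.2 ⟨hl, Finset.mem_univ _⟩) ?_
      exact if_neg fun hh => hne hh.symm
    simp [this]
  rw [sum_update_aux f i _ h0]
  unfold pauliAt
  have h1 : ∀ x : Fin 2, (∏ l ∈ Finset.univ.erase i,
      (if f l = Function.update f i x l then (1:ℂ) else 0)) = 1 := by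
    intro x
    refine Finset.prod_eq_one fun l hl => ?_
    rcases Finset.mem_erase.1 hl with ⟨hli, _⟩
    simp [Function.update, hli]
  have hmem : i ∈ Finset.univ.erase j := Finset.mem_erase.2 ⟨hij, Finset.mem_univ _⟩
  have h2 : ∀ x : Fin 2, (∏ l ∈ Finset.univ.erase j,
      (if Function.update f i x l = g l then (1:ℂ) else 0)) =
      (if x = g i then (1:ℂ) else 0) *
        ∏ l ∈ (Finset.univ.erase j).erase i, (if f l = g l then (1:ℂ) else 0) := by
    intro x
    rw [← Finset.mul_prod_erase _ _ hmem]
    congr 1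
    · simp
    · refine Finset.prod_congr rfl fun l hl => ?_
      rcases Finset.mem_erase.1 hl with ⟨hli, _⟩
      simp [Function.update, hli]
  simp only [Function.update_self, h1, mul_one, h2]
  have hup : ∀ x : Fin 2, Function.update f i x j = f j := by
    intro x; simp [Function.update, hij.symm, (Ne.symm hij)]
  simp only [hup]
  have herase : (Finset.univ.erase j).erase i = (Finset.univ.erase i).erase j := by
    ext l; simp [Finset.mem_erase]; tauto
  rw [herase]
  set D := ∏ l ∈ (Finset.univ.erase i).erase j, (if f l = g l then (1:ℂ) else 0) with hD
  have hterm : ∀ x : Fin 2,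
      A (f i) x * (B (f j) (g j) * ((if x = g i then (1:ℂ) else 0) * D)) =
      if x = g i then A (f i) (g i) * B (f j) (g j) * D else 0 := by
    intro x
    by_cases hx : x = g i
    · subst hx; simp; ring
    · simp [hx]
  rw [Finset.sum_congr rfl fun x _ => hterm x, Finset.sum_ite_eq' Finset.univ (g i)]
  simp

lemma pauliAt_mul_comm_of_ne {i j : ι} (hij : i ≠ j) (A B : Matrix (Fin 2) (Fin 2) ℂ) :
    pauliAt A i * pauliAt B j = pauliAt B j * pauliAt A i := by
  ext f g
  rw [pauliAt_mul_apply_ne hij, pauliAt_mul_apply_ne hij.symm]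
  have herase : (Finset.univ.erase j).erase i = (Finset.univ.erase i).erase j := by
    ext l; simp [Finset.mem_erase]; tauto
  rw [herase]; ring

lemma pauliAt_one (i : ι) : pauliAt (1 : Matrix (Fin 2) (Fin 2) ℂ) i = 1 := by
  ext f g
  unfold pauliAt
  by_cases hfg : f = g
  · subst hfg
    simp [Matrix.one_apply]
  · rcases Function.ne_iff.1 hfg with ⟨j, hj⟩
    rw [Matrix.one_apply_ne hfg]
    by_cases hji : j = i
    · subst hji
      simp [Matrix.one_apply_ne hj]
    · rw [mul_eq_zero]; right
      refine Finset.prod_eq_zero (Finset.mem_erase.2 ⟨hji, Finset.mem_univ _⟩) ?_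
      exact if_neg hj

lemma pauliAt_smul (c : ℂ) (A : Matrix (Fin 2) (Fin 2) ℂ) (i : ι) :
    pauliAt (c • A) i = c • pauliAt A i := by
  ext f g
  rw [Matrix.smul_apply]
  unfold pauliAt
  simp [mul_assoc]

lemma pauliAt_neg (A : Matrix (Fin 2) (Fin 2) ℂ) (i : ι) :
    pauliAt (-A) i = -pauliAt A i := by
  ext f g
  rw [Matrix.neg_apply]
  unfold pauliAt
  simp

lemma pauliAt_conjTranspose (A : Matrix (Fin 2) (Fin 2) ℂ) (i : ι) :
    (pauliAt A i)ᴴ = pauliAt Aᴴ i := by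
  ext f g
  rw [Matrix.conjTranspose_apply]
  unfold pauliAt
  simp only [Matrix.conjTranspose_apply, star_mul']
  congr 1
  · rw [show (star (∏ j ∈ Finset.univ.erase i, if g j = f j then (1:ℂ) else 0)) =
        ∏ j ∈ Finset.univ.erase i, star (if g j = f j then (1:ℂ) else 0) from star_prod _ _]
    refine Finset.prod_congr rfl fun j _ => ?_
    by_cases h : g j = f j <;> simp [h, Ne.symm, eq_comm]

-- 2x2 Pauli facts
lemma X_mul_X : PauliX * PauliX = 1 := by
  ext i j; fin_cases i <;> fin_cases j <;>
    simp [PauliX, Matrix.mul_apply, Fin.sum_univ_two, Matrix.one_apply]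

lemma Z_mul_Z : PauliZ * PauliZ = 1 := by
  ext i j; fin_cases i <;> fin_cases j <;>
    simp [PauliZ, Matrix.mul_apply, Fin.sum_univ_two, Matrix.one_apply]

lemma X_mul_Z : PauliX * PauliZ = -(PauliZ * PauliX) := by
  ext i j; fin_cases i <;> fin_cases j <;>
    simp [PauliX, PauliZ, Matrix.mul_apply, Fin.sum_univ_two]

lemma X_hermitian : PauliXᴴ = PauliX := by
  ext i j; fin_cases i <;> fin_cases j <;> simp [PauliX]

lemma Z_hermitian : PauliZᴴ = PauliZ := by
  ext i j; fin_cases i <;> fin_cases j <;> simp [PauliZ]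

lemma X_comm_X : PauliX * PauliX = (1:ℂ) • (PauliX * PauliX) := by simp
lemma Z_anticomm_X : PauliZ * PauliX = (-1:ℂ) • (PauliX * PauliZ) := by
  rw [X_mul_Z]; simp
lemma X_anticomm_Z : PauliX * PauliZ = (-1:ℂ) • (PauliZ * PauliX) := by
  rw [X_mul_Z]; simp
lemma X_anticomm_Y : PauliX * PauliY = (-1:ℂ) • (PauliY * PauliX) := by
  ext i j; fin_cases i <;> fin_cases j <;>
    simp [PauliX, PauliY, Matrix.mul_apply, Fin.sum_univ_two]
lemma Z_anticomm_Y : PauliZ * PauliY = (-1:ℂ) • (PauliY * PauliZ) := by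
  ext i j; fin_cases i <;> fin_cases j <;>
    simp [PauliZ, PauliY, Matrix.mul_apply, Fin.sum_univ_two]
lemma Z_comm_Z : PauliZ * PauliZ = (1:ℂ) • (PauliZ * PauliZ) := by simp

section Abstract

variable {N : Type*} [Fintype N] [DecidableEq N]

lemma key_lemma (H P V T₁ T₂ : Matrix N N ℂ) (c₁ c₂ : ℂ)
    (hPh : P.IsHermitian) (hHh : H.IsHermitian)
    (hHP : H * P = 0)
    (hT₁₁ : T₁ * T₁ = 1) (hT₂₂ : T₂ * T₂ = 1)
    (hT₁₂ : T₁ * T₂ = T₂ * T₁)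
    (hT₁H : T₁ * H = H * T₁) (hT₂H : T₂ * H = H * T₂)
    (hcomm : H * V = V * H - c₁ • (V * T₁) - c₂ • (V * T₂))
    (hc : ∀ s t : ℂ, (s = 1 ∨ s = -1) → (t = 1 ∨ t = -1) → s * c₁ + t * c₂ ≠ 0) :
    P * V * P = 0 := by
  have hPH : P * H = 0 := by
    have h := congrArg Matrix.conjTranspose hHP
    rwa [Matrix.conjTranspose_mul, hPh.eq, hHh.eq, Matrix.conjTranspose_zero] at h
  set Q : ℂ → ℂ → Matrix N N ℂ := fun s t => (1 + s • T₁) * (1 + t • T₂) with hQdef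
  have hkey : ∀ s t : ℂ, (s = 1 ∨ s = -1) → (t = 1 ∨ t = -1) →
      P * (V * (Q s t * P)) = 0 := by
    intro s t hs ht
    have hss : s * s = 1 := by rcases hs with h | h <;> rw [h] <;> ring
    have htt : t * t = 1 := by rcases ht with h | h <;> rw [h] <;> ring
    have e1 : T₁ * (1 + s • T₁) = s • (1 + s • T₁) := by
      rw [mul_add, mul_one, mul_smul_comm, hT₁₁, smul_add, smul_smul, hss, one_smul]
      exact add_comm _ _
    have hT₁Q : T₁ * Q s t = s • Q s t := by
      show T₁ * ((1 + s • T₁) * (1 + t • T₂)) = _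
      rw [← mul_assoc, e1, smul_mul_assoc]
    have e2 : T₂ * (1 + s • T₁) = (1 + s • T₁) * T₂ := by
      rw [mul_add, add_mul, one_mul, mul_one, mul_smul_comm, smul_mul_assoc, hT₁₂]
    have e3 : T₂ * (1 + t • T₂) = t • (1 + t • T₂) := by
      rw [mul_add, mul_one, mul_smul_comm, hT₂₂, smul_add, smul_smul, htt, one_smul]
      exact add_comm _ _
    have hT₂Q : T₂ * Q s t = t • Q s t := by
      show T₂ * ((1 + s • T₁) * (1 + t • T₂)) = _
      rw [← mul_assoc, e2, mul_assoc, e3, mul_smul_comm]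
    have e4 : H * (1 + s • T₁) = (1 + s • T₁) * H := by
      rw [mul_add, add_mul, one_mul, mul_one, mul_smul_comm, smul_mul_assoc, hT₁H]
    have e5 : H * (1 + t • T₂) = (1 + t • T₂) * H := by
      rw [mul_add, add_mul, one_mul, mul_one, mul_smul_comm, smul_mul_assoc, hT₂H]
    have e6 : H * Q s t = Q s t * H := by
      show H * ((1 + s • T₁) * (1 + t • T₂)) = (1 + s • T₁) * (1 + t • T₂) * H
      rw [← mul_assoc, e4, mul_assoc, e5, ← mul_assoc]
    have hHQ : H * (Q s t * P) = 0 := by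
      rw [← mul_assoc, e6, mul_assoc, hHP, mul_zero]
    have m1 : H * (V * (Q s t * P)) =
        V * (H * (Q s t * P)) - c₁ • (V * (T₁ * (Q s t * P)))
          - c₂ • (V * (T₂ * (Q s t * P))) := by
      rw [← mul_assoc, hcomm, sub_mul, sub_mul, smul_mul_assoc, smul_mul_assoc]
      simp only [mul_assoc]
    have m2 : T₁ * (Q s t * P) = s • (Q s t * P) := by
      rw [← mul_assoc, hT₁Q, smul_mul_assoc]
    have m3 : T₂ * (Q s t * P) = t • (Q s t * P) := by
      rw [← mul_assoc, hT₂Q, smul_mul_assoc]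
    have main : H * (V * (Q s t * P)) = (-(s * c₁ + t * c₂)) • (V * (Q s t * P)) := by
      rw [m1, hHQ, mul_zero, m2, m3, mul_smul_comm, mul_smul_comm, smul_smul, smul_smul]
      module
    have hz : (0 : Matrix N N ℂ) = (-(s * c₁ + t * c₂)) • (P * (V * (Q s t * P))) := by
      have := congrArg (fun M => P * M) main
      simp only [mul_smul_comm] at this
      rw [← mul_assoc, hPH, zero_mul] at this
      exact this
    have hlam : (-(s * c₁ + t * c₂)) ≠ 0 := neg_ne_zero.2 (hc s t hs ht)
    rcases smul_eq_zero.mp hz.symm with h | h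
    · exact absurd h hlam
    · exact h
  have hQsum : Q 1 1 + Q 1 (-1) + Q (-1) 1 + Q (-1) (-1) = (4 : ℂ) • 1 := by
    have h4 : (4:ℂ) • (1 : Matrix N N ℂ) = 1 + 1 + 1 + 1 := by
      have h : (4:ℂ) = 1 + 1 + 1 + 1 := by norm_num
      rw [h, add_smul, add_smul, add_smul, one_smul]
    rw [h4]
    simp only [hQdef, one_smul, neg_one_smul]
    noncomm_ring
  have expand : P * (V * ((Q 1 1 + Q 1 (-1) + Q (-1) 1 + Q (-1) (-1)) * P)) = 0 := by
    simp only [add_mul, mul_add]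
    rw [hkey 1 1 (Or.inl rfl) (Or.inl rfl), hkey 1 (-1) (Or.inl rfl) (Or.inr rfl),
      hkey (-1) 1 (Or.inr rfl) (Or.inl rfl), hkey (-1) (-1) (Or.inr rfl) (Or.inr rfl)]
    simp
  rw [hQsum, smul_mul_assoc, one_mul, mul_smul_comm, mul_smul_comm] at expand
  rcases smul_eq_zero.mp expand with h | h
  · norm_num at h
  · rw [mul_assoc]; exact h

end Abstract

section Pairs

variable {ι : Type*} [Fintype ι] [DecidableEq ι]

lemma mul_pauliAt_comm_pair {r s i : ι} (hr : r ≠ i) (hs : s ≠ i)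
    (B C A : Matrix (Fin 2) (Fin 2) ℂ) :
    (pauliAt B r * pauliAt C s) * pauliAt A i = pauliAt A i * (pauliAt B r * pauliAt C s) := by
  rw [mul_assoc, pauliAt_mul_comm_of_ne hs, ← mul_assoc, pauliAt_mul_comm_of_ne hr, mul_assoc]

lemma pair_mul_pair {p q : ι} (hpq : p ≠ q) (A B C D : Matrix (Fin 2) (Fin 2) ℂ) :
    (pauliAt A p * pauliAt B q) * (pauliAt C p * pauliAt D q) =
      pauliAt (A * C) p * pauliAt (B * D) q := by
  rw [mul_assoc, ← mul_assoc (pauliAt B q), pauliAt_mul_comm_of_ne hpq.symm, mul_assoc,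
    ← mul_assoc, pauliAt_mul_same, pauliAt_mul_same]

lemma pairs_comm {p q r s : ι} (hpr : p ≠ r) (hqr : q ≠ r) (hps : p ≠ s) (hqs : q ≠ s)
    (A B C D : Matrix (Fin 2) (Fin 2) ℂ) :
    (pauliAt A p * pauliAt B q) * (pauliAt C r * pauliAt D s) =
      (pauliAt C r * pauliAt D s) * (pauliAt A p * pauliAt B q) := by
  rw [← mul_assoc, mul_pauliAt_comm_pair hpr hqr, mul_assoc,
    mul_pauliAt_comm_pair hps hqs, ← mul_assoc]

lemma pair_mul_pauliAt {p q i : ι} (hpq : p ≠ q) (hi : i = p ∨ i = q)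
    (B A : Matrix (Fin 2) (Fin 2) ℂ) (ε : ℂ) (h : B * A = ε • (A * B)) :
    (pauliAt B p * pauliAt B q) * pauliAt A i =
      ε • (pauliAt A i * (pauliAt B p * pauliAt B q)) := by
  rcases hi with rfl | rfl
  · rw [mul_assoc, pauliAt_mul_comm_of_ne hpq.symm, ← mul_assoc, pauliAt_mul_same, h,
      pauliAt_smul, smul_mul_assoc, ← pauliAt_mul_same, mul_assoc]
  · rw [mul_assoc, pauliAt_mul_same, h, pauliAt_smul, mul_smul_comm, ← pauliAt_mul_same,
      ← mul_assoc, pauliAt_mul_comm_of_ne hpq, mul_assoc]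

lemma pair_sq {p q : ι} (hpq : p ≠ q) (B : Matrix (Fin 2) (Fin 2) ℂ) (hB : B * B = 1) :
    (pauliAt B p * pauliAt B q) * (pauliAt B p * pauliAt B q) = 1 := by
  rw [pair_mul_pair hpq, hB, pauliAt_one, pauliAt_one, one_mul]

lemma pair_herm {p q : ι} (hpq : p ≠ q) (B : Matrix (Fin 2) (Fin 2) ℂ) (hB : Bᴴ = B) :
    (pauliAt B p * pauliAt B q)ᴴ = pauliAt B p * pauliAt B q := by
  rw [Matrix.conjTranspose_mul, pauliAt_conjTranspose, pauliAt_conjTranspose, hB,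
    pauliAt_mul_comm_of_ne hpq.symm]

lemma pairXZ_comm {p q : ι} (hpq : p ≠ q) :
    (pauliAt PauliX p * pauliAt PauliX q) * (pauliAt PauliZ p * pauliAt PauliZ q) =
      (pauliAt PauliZ p * pauliAt PauliZ q) * (pauliAt PauliX p * pauliAt PauliX q) := by
  rw [pair_mul_pair hpq, pair_mul_pair hpq, X_mul_Z, pauliAt_neg, pauliAt_neg, neg_mul_neg]

end Pairs

section Main

def blockTerm (n : ℕ) (gx gz : Fin n → ℝ) (b : Fin n) :
    Matrix (Fin n × Fin 4 → Fin 2) (Fin n × Fin 4 → Fin 2) ℂ :=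
  (gx b : ℂ) • (pauliAt PauliX (b, (0 : Fin 4)) * pauliAt PauliX (b, (1 : Fin 4))) +
  (gz b : ℂ) • (pauliAt PauliZ (b, (0 : Fin 4)) * pauliAt PauliZ (b, (1 : Fin 4))) +
  (gx b : ℂ) • (pauliAt PauliX (b, (2 : Fin 4)) * pauliAt PauliX (b, (3 : Fin 4))) +
  (gz b : ℂ) • (pauliAt PauliZ (b, (2 : Fin 4)) * pauliAt PauliZ (b, (3 : Fin 4)))

lemma HpenBlocks_eq (n : ℕ) (gx gz : Fin n → ℝ) :
    HpenBlocks n gx gz = ∑ b, blockTerm n gx gz b := rfl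

set_option maxHeartbeats 2000000 in
lemma inner_aux (n : ℕ) (gx gz : Fin n → ℝ)
    (P₀ : Matrix (Fin n × Fin 4 → Fin 2) (Fin n × Fin 4 → Fin 2) ℂ)
    (hsa : P₀.IsHermitian) (hidem : P₀ * P₀ = P₀)
    (hker : ∀ v : (Fin n × Fin 4 → Fin 2) → ℂ,
      (HpenBlocks n gx gz).mulVec v = 0 ↔ P₀.mulVec v = v)
    (b₀ : Fin n) (k : Fin 4) (A : Matrix (Fin 2) (Fin 2) ℂ) (ε₁ ε₂ : ℂ)
    (hX : PauliX * A = ε₁ • (A * PauliX)) (hZ : PauliZ * A = ε₂ • (A * PauliZ))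
    (hεc : ∀ s t : ℂ, (s = 1 ∨ s = -1) → (t = 1 ∨ t = -1) →
      s * ((gx b₀ : ℂ) * (1 - ε₁)) + t * ((gz b₀ : ℂ) * (1 - ε₂)) ≠ 0)
    (u v u' v' : Fin 4) (huv : u ≠ v) (hu'v' : u' ≠ v')
    (huu' : u ≠ u') (huv' : u ≠ v') (hvu' : v ≠ u') (hvv' : v ≠ v')
    (hkuv : k = u ∨ k = v)
    (hbt : blockTerm n gx gz b₀ =
      (gx b₀ : ℂ) • (pauliAt PauliX (b₀, u) * pauliAt PauliX (b₀, v)) +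
      (gz b₀ : ℂ) • (pauliAt PauliZ (b₀, u) * pauliAt PauliZ (b₀, v)) +
      (gx b₀ : ℂ) • (pauliAt PauliX (b₀, u') * pauliAt PauliX (b₀, v')) +
      (gz b₀ : ℂ) • (pauliAt PauliZ (b₀, u') * pauliAt PauliZ (b₀, v'))) :
    P₀ * pauliAt A (b₀, k) * P₀ = 0 := by
  set H := HpenBlocks n gx gz with hH
  set V := pauliAt A ((b₀, k) : Fin n × Fin 4) with hV
  set T₁ := pauliAt PauliX ((b₀, u) : Fin n × Fin 4) * pauliAt PauliX (b₀, v) with hT₁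
  set T₂ := pauliAt PauliZ ((b₀, u) : Fin n × Fin 4) * pauliAt PauliZ (b₀, v) with hT₂
  set c₁ := (gx b₀ : ℂ) * (1 - ε₁) with hc₁
  set c₂ := (gz b₀ : ℂ) * (1 - ε₂) with hc₂
  -- site inequalities
  have hpq : ((b₀, u) : Fin n × Fin 4) ≠ (b₀, v) := by simp [Prod.ext_iff, huv]
  have hpq' : ((b₀, u') : Fin n × Fin 4) ≠ (b₀, v') := by simp [Prod.ext_iff, hu'v']
  have hi : ((b₀, k) : Fin n × Fin 4) = (b₀, u) ∨ ((b₀, k) : Fin n × Fin 4) = (b₀, v) := by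
    rcases hkuv with rfl | rfl
    · exact Or.inl rfl
    · exact Or.inr rfl
  have hu'k : ((b₀, u') : Fin n × Fin 4) ≠ (b₀, k) := by
    rcases hkuv with rfl | rfl <;> simp [Prod.ext_iff, huu'.symm, hvu'.symm]
  have hv'k : ((b₀, v') : Fin n × Fin 4) ≠ (b₀, k) := by
    rcases hkuv with rfl | rfl <;> simp [Prod.ext_iff, huv'.symm, hvv'.symm]
  -- H * P₀ = 0
  have hHP : H * P₀ = 0 := by
    ext r j
    have hcol : P₀.mulVec (fun x => P₀ x j) = fun x => P₀ x j := by
      funext x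
      have : (P₀ * P₀) x j = P₀ x j := by rw [hidem]
      simpa [Matrix.mul_apply, Matrix.mulVec, dotProduct] using this
    have h0 : H.mulVec (fun x => P₀ x j) = 0 := (hker _).mpr hcol
    have := congrFun h0 r
    simpa [Matrix.mul_apply, Matrix.mulVec, dotProduct] using this
  -- Hermiticity of H
  have hb01 : ∀ b : Fin n, ((b, (0:Fin 4)) : Fin n × Fin 4) ≠ (b, 1) := by
    intro b; simp [Prod.ext_iff]
  have hb23 : ∀ b : Fin n, ((b, (2:Fin 4)) : Fin n × Fin 4) ≠ (b, 3) := by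
    intro b; simp [Prod.ext_iff]
  have hHh : H.IsHermitian := by
    rw [hH, HpenBlocks_eq]
    unfold Matrix.IsHermitian
    rw [Matrix.conjTranspose_sum]
    refine Finset.sum_congr rfl fun b _ => ?_
    unfold blockTerm
    rw [Matrix.conjTranspose_add, Matrix.conjTranspose_add, Matrix.conjTranspose_add,
      Matrix.conjTranspose_smul, Matrix.conjTranspose_smul, Matrix.conjTranspose_smul,
      Matrix.conjTranspose_smul,
      pair_herm (hb01 b) _ X_hermitian, pair_herm (hb01 b) _ Z_hermitian,
      pair_herm (hb23 b) _ X_hermitian, pair_herm (hb23 b) _ Z_hermitian]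
    simp [Complex.star_def, Complex.conj_ofReal]
  -- T₁, T₂ commute with H
  have n1 : ((b₀, u) : Fin n × Fin 4) ≠ (b₀, u') := by simp [Prod.ext_iff, huu']
  have n2 : ((b₀, v) : Fin n × Fin 4) ≠ (b₀, u') := by simp [Prod.ext_iff, hvu']
  have n3 : ((b₀, u) : Fin n × Fin 4) ≠ (b₀, v') := by simp [Prod.ext_iff, huv']
  have n4 : ((b₀, v) : Fin n × Fin 4) ≠ (b₀, v') := by simp [Prod.ext_iff, hvv']
  have hT₁bt : ∀ b, T₁ * blockTerm n gx gz b = blockTerm n gx gz b * T₁ := by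
    intro b
    by_cases hb : b = b₀
    · subst hb
      rw [hbt, hT₁]
      simp only [mul_add, add_mul, mul_smul_comm, smul_mul_assoc]
      rw [pairXZ_comm hpq, pairs_comm n1 n2 n3 n4 PauliX PauliX PauliX PauliX,
        pairs_comm n1 n2 n3 n4 PauliX PauliX PauliZ PauliZ]
    · have hbx : ∀ x y : Fin 4, ((b₀, x) : Fin n × Fin 4) ≠ (b, y) := by
        intro x y; simp [Prod.ext_iff, Ne.symm hb]
      unfold blockTerm
      simp only [mul_add, add_mul, mul_smul_comm, smul_mul_assoc]
      rw [hT₁, pairs_comm (hbx u 0) (hbx v 0) (hbx u 1) (hbx v 1) PauliX PauliX PauliX PauliX,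
        pairs_comm (hbx u 0) (hbx v 0) (hbx u 1) (hbx v 1) PauliX PauliX PauliZ PauliZ,
        pairs_comm (hbx u 2) (hbx v 2) (hbx u 3) (hbx v 3) PauliX PauliX PauliX PauliX,
        pairs_comm (hbx u 2) (hbx v 2) (hbx u 3) (hbx v 3) PauliX PauliX PauliZ PauliZ]
  have hT₂bt : ∀ b, T₂ * blockTerm n gx gz b = blockTerm n gx gz b * T₂ := by
    intro b
    by_cases hb : b = b₀
    · subst hb
      rw [hbt, hT₂]
      simp only [mul_add, add_mul, mul_smul_comm, smul_mul_assoc]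
      rw [← pairXZ_comm hpq, pairs_comm n1 n2 n3 n4 PauliZ PauliZ PauliX PauliX,
        pairs_comm n1 n2 n3 n4 PauliZ PauliZ PauliZ PauliZ]
    · have hbx : ∀ x y : Fin 4, ((b₀, x) : Fin n × Fin 4) ≠ (b, y) := by
        intro x y; simp [Prod.ext_iff, Ne.symm hb]
      unfold blockTerm
      simp only [mul_add, add_mul, mul_smul_comm, smul_mul_assoc]
      rw [hT₂, pairs_comm (hbx u 0) (hbx v 0) (hbx u 1) (hbx v 1) PauliZ PauliZ PauliX PauliX,
        pairs_comm (hbx u 0) (hbx v 0) (hbx u 1) (hbx v 1) PauliZ PauliZ PauliZ PauliZ,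
        pairs_comm (hbx u 2) (hbx v 2) (hbx u 3) (hbx v 3) PauliZ PauliZ PauliX PauliX,
        pairs_comm (hbx u 2) (hbx v 2) (hbx u 3) (hbx v 3) PauliZ PauliZ PauliZ PauliZ]
  have hT₁H : T₁ * H = H * T₁ := by
    rw [hH, HpenBlocks_eq, Finset.mul_sum, Finset.sum_mul]
    exact Finset.sum_congr rfl fun b _ => hT₁bt b
  have hT₂H : T₂ * H = H * T₂ := by
    rw [hH, HpenBlocks_eq, Finset.mul_sum, Finset.sum_mul]
    exact Finset.sum_congr rfl fun b _ => hT₂bt b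
  -- the commutator of H with V
  have hTV1 : T₁ * V = ε₁ • (V * T₁) := pair_mul_pauliAt hpq hi PauliX A ε₁ hX
  have hTV2 : T₂ * V = ε₂ • (V * T₂) := pair_mul_pauliAt hpq hi PauliZ A ε₂ hZ
  have hblk : blockTerm n gx gz b₀ * V =
      V * blockTerm n gx gz b₀ - c₁ • (V * T₁) - c₂ • (V * T₂) := by
    rw [hbt]
    simp only [add_mul, mul_add, smul_mul_assoc, mul_smul_comm]
    rw [hTV1, hTV2,
      mul_pauliAt_comm_pair hu'k hv'k PauliX PauliX A,
      mul_pauliAt_comm_pair hu'k hv'k PauliZ PauliZ A, hc₁, hc₂]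
    module
  have hHV : H * V = V * H - c₁ • (V * T₁) - c₂ • (V * T₂) := by
    rw [hH, HpenBlocks_eq, Finset.sum_mul, Finset.mul_sum]
    have hterm : ∀ b ∈ Finset.univ, blockTerm n gx gz b * V =
        V * blockTerm n gx gz b +
          (if b = b₀ then (- (c₁ • (V * T₁)) - c₂ • (V * T₂)) else 0) := by
      intro b _
      by_cases hb : b = b₀
      · subst hb
        rw [if_pos rfl, hblk]
        abel
      · have hbk : ∀ x : Fin 4, ((b, x) : Fin n × Fin 4) ≠ (b₀, k) := by
          intro x; simp [Prod.ext_iff, hb]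
        rw [if_neg hb, add_zero]
        unfold blockTerm
        simp only [add_mul, mul_add, smul_mul_assoc, mul_smul_comm]
        rw [mul_pauliAt_comm_pair (hbk 0) (hbk 1) PauliX PauliX A,
          mul_pauliAt_comm_pair (hbk 0) (hbk 1) PauliZ PauliZ A,
          mul_pauliAt_comm_pair (hbk 2) (hbk 3) PauliX PauliX A,
          mul_pauliAt_comm_pair (hbk 2) (hbk 3) PauliZ PauliZ A]
    rw [Finset.sum_congr rfl hterm, Finset.sum_add_distrib,
      Finset.sum_ite_eq' Finset.univ b₀]
    simp only [Finset.mem_univ, if_true]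
    abel
  exact key_lemma H P₀ V T₁ T₂ c₁ c₂ hsa hHh hHP
    (pair_sq hpq PauliX X_mul_X) (pair_sq hpq PauliZ Z_mul_Z) (pairXZ_comm hpq)
    hT₁H hT₂H hHV hεc

end Main

lemma main_aux (n : ℕ) (gx gz : Fin n → ℝ)
    (P₀ : Matrix (Fin n × Fin 4 → Fin 2) (Fin n × Fin 4 → Fin 2) ℂ)
    (hsa : P₀.IsHermitian) (hidem : P₀ * P₀ = P₀)
    (hker : ∀ v : (Fin n × Fin 4 → Fin 2) → ℂ,
      (HpenBlocks n gx gz).mulVec v = 0 ↔ P₀.mulVec v = v)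
    (b₀ : Fin n) (k : Fin 4) (A : Matrix (Fin 2) (Fin 2) ℂ) (ε₁ ε₂ : ℂ)
    (hX : PauliX * A = ε₁ • (A * PauliX)) (hZ : PauliZ * A = ε₂ • (A * PauliZ))
    (hεc : ∀ s t : ℂ, (s = 1 ∨ s = -1) → (t = 1 ∨ t = -1) →
      s * ((gx b₀ : ℂ) * (1 - ε₁)) + t * ((gz b₀ : ℂ) * (1 - ε₂)) ≠ 0) :
    P₀ * pauliAt A (b₀, k) * P₀ = 0 := by
  have hbt23 : blockTerm n gx gz b₀ =
      (gx b₀ : ℂ) • (pauliAt PauliX (b₀, (2:Fin 4)) * pauliAt PauliX (b₀, (3:Fin 4))) +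
      (gz b₀ : ℂ) • (pauliAt PauliZ (b₀, (2:Fin 4)) * pauliAt PauliZ (b₀, (3:Fin 4))) +
      (gx b₀ : ℂ) • (pauliAt PauliX (b₀, (0:Fin 4)) * pauliAt PauliX (b₀, (1:Fin 4))) +
      (gz b₀ : ℂ) • (pauliAt PauliZ (b₀, (0:Fin 4)) * pauliAt PauliZ (b₀, (1:Fin 4))) := by
    unfold blockTerm; abel
  rcases (by decide : ∀ m : Fin 4, m = 0 ∨ m = 1 ∨ m = 2 ∨ m = 3) k with rfl | rfl | rfl | rfl
  · exact inner_aux n gx gz P₀ hsa hidem hker b₀ 0 A ε₁ ε₂ hX hZ hεc 0 1 2 3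
      (by decide) (by decide) (by decide) (by decide) (by decide) (by decide)
      (Or.inl rfl) rfl
  · exact inner_aux n gx gz P₀ hsa hidem hker b₀ 1 A ε₁ ε₂ hX hZ hεc 0 1 2 3
      (by decide) (by decide) (by decide) (by decide) (by decide) (by decide)
      (Or.inr rfl) rfl
  · exact inner_aux n gx gz P₀ hsa hidem hker b₀ 2 A ε₁ ε₂ hX hZ hεc 2 3 0 1
      (by decide) (by decide) (by decide) (by decide) (by decide) (by decide)
      (Or.inl rfl) hbt23
  · exact inner_aux n gx gz P₀ hsa hidem hker b₀ 3 A ε₁ ε₂ hX hZ hεc 2 3 0 1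
      (by decide) (by decide) (by decide) (by decide) (by decide) (by decide)
      (Or.inr rfl) hbt23


/-- The zero-eigenspace of the `[[4n,2n,2]]` block penalty Hamiltonian detects all
single-qubit Pauli errors: `P₀ V P₀ = 0` for every single-qubit Pauli operator `V`. -/
theorem block_code_detects_single_paulis (n : ℕ) (gx gz : Fin n → ℝ)
    (hgx : ∀ b, gx b ≠ 0) (hgz : ∀ b, gz b ≠ 0) (hne : ∀ b, |gx b| ≠ |gz b|)
    (P₀ : Matrix (Fin n × Fin 4 → Fin 2) (Fin n × Fin 4 → Fin 2) ℂ)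
    (hsa : P₀.IsHermitian) (hidem : P₀ * P₀ = P₀)
    (hker : ∀ v : (Fin n × Fin 4 → Fin 2) → ℂ,
      (HpenBlocks n gx gz).mulVec v = 0 ↔ P₀.mulVec v = v) :
    ∀ (i : Fin n × Fin 4) (A : Matrix (Fin 2) (Fin 2) ℂ),
      A = PauliX ∨ A = PauliY ∨ A = PauliZ →
      P₀ * pauliAt A i * P₀ = 0 := by
  rintro ⟨b₀, k⟩ A hA
  have hgx' : (gx b₀ : ℂ) ≠ 0 := Complex.ofReal_ne_zero.2 (hgx b₀)
  have hgz' : (gz b₀ : ℂ) ≠ 0 := Complex.ofReal_ne_zero.2 (hgz b₀)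
  have habs : ∀ x y : ℝ, (x = y ∨ x = -y) → |x| = |y| := by
    rintro x y (rfl | rfl) <;> simp [abs_neg]
  rcases hA with rfl | rfl | rfl
  · -- A = PauliX : ε₁ = 1, ε₂ = -1
    refine main_aux n gx gz P₀ hsa hidem hker b₀ k PauliX 1 (-1) (by simp) ?_ ?_
    · rw [X_mul_Z]; simp
    · intro s t hs ht hcon
      have ht0 : t ≠ 0 := by rcases ht with rfl | rfl <;> norm_num
      have h3 : t * (gz b₀ : ℂ) * 2 = 0 := by linear_combination hcon
      exact mul_ne_zero (mul_ne_zero ht0 hgz') two_ne_zero h3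
  · -- A = PauliY : ε₁ = -1, ε₂ = -1
    refine main_aux n gx gz P₀ hsa hidem hker b₀ k PauliY (-1) (-1) ?_ ?_ ?_
    · rw [X_anticomm_Y]
    · rw [Z_anticomm_Y]
    · intro s t hs ht hcon
      apply hne b₀
      apply habs
      rcases hs with rfl | rfl <;> rcases ht with rfl | rfl
      · right
        have h : (gx b₀ : ℂ) = -(gz b₀ : ℂ) := by linear_combination hcon / 2
        exact_mod_cast h
      · left
        have h : (gx b₀ : ℂ) = (gz b₀ : ℂ) := by linear_combination hcon / 2
        exact_mod_cast h
      · left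
        have h : (gx b₀ : ℂ) = (gz b₀ : ℂ) := by linear_combination -hcon / 2
        exact_mod_cast h
      · right
        have h : (gx b₀ : ℂ) = -(gz b₀ : ℂ) := by linear_combination -hcon / 2
        exact_mod_cast h
  · -- A = PauliZ : ε₁ = -1, ε₂ = 1
    refine main_aux n gx gz P₀ hsa hidem hker b₀ k PauliZ (-1) 1 ?_ (by simp) ?_
    · rw [X_mul_Z]; simp
    · intro s t hs ht hcon
      have hs0 : s ≠ 0 := by rcases hs with rfl | rfl <;> norm_num
      have h3 : s * (gx b₀ : ℂ) * 2 = 0 := by linear_combination hcon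
      exact mul_ne_zero (mul_ne_zero hs0 hgx') two_ne_zero h3

end
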